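/- Let M₁ and M₂ be real symmetric positive definite 2n×2n matrices with M₁ − M₂ positive semidefinite. Then for every k = 1, …, 2n, the k-th smallest eigenvalue of the real symmetric positive definite matrix −√M₁ · σ_n · M₁ · σ_n · √M₁ is greater than or equal to the k-th smallest eigenvalue of −√M₂ · σ_n · M₂ · σ_n · √M₂. Equivalently, the ascendingly ordered symplectic eigenvalues of M₁ dominate entrywise those of M₂. -/

import Mathlib

open Matrix

open scoped ComplexOrder in
/-- The positive semidefinite square root of a positive semidefinite matrix (the definition
`Matrix.PosSemidef.sqrt` of Mathlib, Dec 2024, since removed from Mathlib). -/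
noncomputable def Matrix.PosSemidef.sqrt {n : Type*} {𝕜 : Type*} [Fintype n] [RCLike 𝕜]
    [DecidableEq n] {A : Matrix n n 𝕜} (hA : A.PosSemidef) : Matrix n n 𝕜 :=
  hA.1.eigenvectorUnitary.1 * diagonal ((↑) ∘ (√·) ∘ hA.1.eigenvalues) *
  (star hA.1.eigenvectorUnitary : Matrix n n 𝕜)

/-- The standard symplectic form `σ_n = ⊕_{i=1}^n [[0,-1],[1,0]]` on `ℝ^{2n}`. -/
noncomputable def symp (m : ℕ) : Matrix (Fin (2 * m)) (Fin (2 * m)) ℝ :=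
  Matrix.of fun i j =>
    if i.val = j.val + 1 ∧ i.val % 2 = 1 then 1
    else if j.val = i.val + 1 ∧ j.val % 2 = 1 then -1 else 0

/-- The ascendingly ordered eigenvalues of a Hermitian real matrix. -/
noncomputable def sortedEigs {m : ℕ} (A : Matrix (Fin m) (Fin m) ℝ) (hA : A.IsHermitian) :
    Fin m → ℝ := hA.eigenvalues ∘ Tuple.sort hA.eigenvalues

lemma Matrix.PosSemidef.posSemidef_sqrt {n : Type*} [Fintype n] [DecidableEq n]
    {A : Matrix n n ℝ} (hA : A.PosSemidef) : hA.sqrt.PosSemidef := by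
  unfold Matrix.PosSemidef.sqrt
  have hd : (diagonal ((RCLike.ofReal : ℝ → ℝ) ∘ Real.sqrt ∘ hA.1.eigenvalues) :
      Matrix n n ℝ).PosSemidef :=
    PosSemidef.diagonal (fun i => by simp [Real.sqrt_nonneg])
  simpa [star_eq_conjTranspose] using
    hd.mul_mul_conjTranspose_same (hA.1.eigenvectorUnitary : Matrix n n ℝ)

lemma Matrix.PosSemidef.sqrt_mul_self {n : Type*} [Fintype n] [DecidableEq n]
    {A : Matrix n n ℝ} (hA : A.PosSemidef) : hA.sqrt * hA.sqrt = A := by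
  have hUU : (star hA.1.eigenvectorUnitary : Matrix n n ℝ) *
      (hA.1.eigenvectorUnitary : Matrix n n ℝ) = 1 := by
    simp
  have hD : (diagonal ((RCLike.ofReal : ℝ → ℝ) ∘ Real.sqrt ∘ hA.1.eigenvalues) : Matrix n n ℝ) *
      diagonal ((RCLike.ofReal : ℝ → ℝ) ∘ Real.sqrt ∘ hA.1.eigenvalues) =
      diagonal (RCLike.ofReal ∘ hA.1.eigenvalues) := by
    rw [diagonal_mul_diagonal]; congr 1; funext i
    simp [Real.mul_self_sqrt (hA.eigenvalues_nonneg i)]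
  conv_rhs => rw [hA.1.spectral_theorem, Unitary.conjStarAlgAut_apply]
  unfold Matrix.PosSemidef.sqrt
  rw [← hD]
  simp only [Matrix.mul_assoc]
  rw [← Matrix.mul_assoc (star hA.1.eigenvectorUnitary : Matrix n n ℝ) _, hUU, Matrix.one_mul]

namespace SympSpecAux

open Polynomial Finset
open scoped RealInnerProductSpace

/-! ### Facts about `symp` -/

lemma symp_apply (n : ℕ) (i j : Fin (2 * n)) :
    symp n i j = if i.val = j.val + 1 ∧ i.val % 2 = 1 then 1
      else if j.val = i.val + 1 ∧ j.val % 2 = 1 then -1 else 0 := rfl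

lemma symp_transpose (n : ℕ) : (symp n)ᵀ = -symp n := by
  ext i j
  rw [transpose_apply, Matrix.neg_apply, symp_apply, symp_apply]
  by_cases h1 : j.val = i.val + 1 ∧ j.val % 2 = 1
  · have h2 : ¬(i.val = j.val + 1 ∧ i.val % 2 = 1) := by omega
    simp only [if_pos h1, if_neg h2] <;> norm_num
  · by_cases h2 : i.val = j.val + 1 ∧ i.val % 2 = 1
    · simp only [if_pos h2, if_neg h1] <;> norm_num
    · simp only [if_neg h1, if_neg h2] <;> norm_num

lemma symp_mul_symp (n : ℕ) : symp n * symp n = -1 := by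
  ext i j
  rw [mul_apply]
  have hrhs : (-1 : Matrix (Fin (2*n)) (Fin (2*n)) ℝ) i j = if i = j then -1 else 0 := by
    by_cases h : i = j <;> simp [h, Matrix.one_apply]
  rcases Nat.even_or_odd i.val with hi | hi
  · have hi' : i.val % 2 = 0 := Nat.even_iff.mp hi
    have hlt : i.val + 1 < 2 * n := by omega
    set l₀ : Fin (2 * n) := ⟨i.val + 1, hlt⟩ with hl₀
    have e1 : symp n i l₀ = -1 := by
      rw [symp_apply, if_neg (by simp [hl₀] <;> omega), if_pos (by simp [hl₀] <;> omega)]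
    have e2 : symp n l₀ j = if i = j then 1 else 0 := by
      by_cases hij : i = j
      · subst hij
        rw [symp_apply, if_pos (by simp [hl₀] <;> omega), if_pos rfl]
      · have hij' : i.val ≠ j.val := fun h => hij (Fin.ext h)
        rw [symp_apply, if_neg (by simp [hl₀] <;> omega), if_neg (by simp [hl₀] <;> omega),
          if_neg hij]
    rw [Finset.sum_eq_single l₀, e1, e2, hrhs]
    · by_cases h : i = j <;> simp [h]
    · intro l _ hl
      have hlv : l.val ≠ i.val + 1 := fun h => hl (Fin.ext (by simp [hl₀, h]))
      have : symp n i l = 0 := by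
        rw [symp_apply, if_neg (by omega), if_neg (by omega)]
      rw [this, zero_mul]
    · simp
  · have hi' : i.val % 2 = 1 := Nat.odd_iff.mp hi
    have hlt : i.val - 1 < 2 * n := by omega
    set l₀ : Fin (2 * n) := ⟨i.val - 1, hlt⟩ with hl₀
    have e1 : symp n i l₀ = 1 := by
      rw [symp_apply, if_pos (by simp [hl₀] <;> omega)]
    have e2 : symp n l₀ j = if i = j then -1 else 0 := by
      by_cases hij : i = j
      · subst hij
        rw [symp_apply, if_neg (by simp [hl₀] <;> omega), if_pos (by simp [hl₀] <;> omega),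
          if_pos rfl]
      · have hij' : i.val ≠ j.val := fun h => hij (Fin.ext h)
        rw [symp_apply, if_neg (by simp [hl₀] <;> omega), if_neg (by simp [hl₀] <;> omega),
          if_neg hij]
    rw [Finset.sum_eq_single l₀, e1, e2, hrhs]
    · by_cases h : i = j <;> simp [h]
    · intro l _ hl
      have hlv : l.val ≠ i.val - 1 := fun h => hl (Fin.ext (by simp [hl₀, h]))
      have : symp n i l = 0 := by
        rw [symp_apply, if_neg (by omega), if_neg (by omega)]
      rw [this, zero_mul]
    · simp

lemma symp_isUnit (n : ℕ) : IsUnit (symp n) := by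
  refine ⟨⟨symp n, -symp n, ?_, ?_⟩, rfl⟩ <;>
    simp [Matrix.mul_neg, Matrix.neg_mul, symp_mul_symp]

/-! ### Characteristic polynomial machinery -/

lemma sortedEigs_congr {m : ℕ} {A B : Matrix (Fin m) (Fin m) ℝ} (h : A = B)
    (hA : A.IsHermitian) (hB : B.IsHermitian) : sortedEigs A hA = sortedEigs B hB := by
  subst h; rfl

lemma charpoly_conj {m : ℕ} (P A : Matrix (Fin m) (Fin m) ℝ) (hP : IsUnit P) :
    (P * A * P⁻¹).charpoly = A.charpoly := by
  have hPd : IsUnit P.det := (Matrix.isUnit_iff_isUnit_det P).mp hP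
  have key : charmatrix (P * A * P⁻¹) =
      (C : ℝ →+* ℝ[X]).mapMatrix P * charmatrix A * (C : ℝ →+* ℝ[X]).mapMatrix P⁻¹ := by
    have h1 : (C : ℝ →+* ℝ[X]).mapMatrix P * (C : ℝ →+* ℝ[X]).mapMatrix P⁻¹ = 1 := by
      rw [← RingHom.map_mul, Matrix.mul_nonsing_inv P hPd, RingHom.map_one]
    rw [charmatrix, charmatrix, Matrix.mul_sub, Matrix.sub_mul]
    congr 1
    · have hcomm : ∀ B : Matrix (Fin m) (Fin m) ℝ[X],
          B * Matrix.diagonal (fun _ => (X : ℝ[X])) = Matrix.diagonal (fun _ => (X : ℝ[X])) * B := by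
        intro B
        ext i j
        rw [Matrix.mul_diagonal, Matrix.diagonal_mul, mul_comm]
      rw [scalar_apply, hcomm, Matrix.mul_assoc, h1, Matrix.mul_one]
    · rw [RingHom.map_mul, RingHom.map_mul]
  rw [Matrix.charpoly, Matrix.charpoly, key, det_mul, det_mul, mul_comm, ← mul_assoc,
    ← det_mul, ← RingHom.map_mul, Matrix.nonsing_inv_mul P hPd, RingHom.map_one, det_one,
    one_mul]

lemma charpoly_isHermitian {m : ℕ} {A : Matrix (Fin m) (Fin m) ℝ} (hA : A.IsHermitian) :
    A.charpoly = ∏ i, (X - C (hA.eigenvalues i)) := by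
  have hU : IsUnit (hA.eigenvectorUnitary : Matrix (Fin m) (Fin m) ℝ) := by
    apply Matrix.isUnit_iff_isUnit_det _ |>.mpr
    apply isUnit_iff_ne_zero.mpr
    intro h
    have h1 : (star (hA.eigenvectorUnitary : Matrix (Fin m) (Fin m) ℝ)) *
        (hA.eigenvectorUnitary : Matrix (Fin m) (Fin m) ℝ) = 1 :=
      (Matrix.mem_unitaryGroup_iff').mp (hA.eigenvectorUnitary).2
    have := congrArg Matrix.det h1
    rw [Matrix.det_mul, h, mul_zero, Matrix.det_one] at this
    exact zero_ne_one this
  have hinv : (star (hA.eigenvectorUnitary : Matrix (Fin m) (Fin m) ℝ)) =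
      (hA.eigenvectorUnitary : Matrix (Fin m) (Fin m) ℝ)⁻¹ := by
    symm
    apply Matrix.inv_eq_left_inv
    exact (Matrix.mem_unitaryGroup_iff').mp (hA.eigenvectorUnitary).2
  have hdiag : (Matrix.diagonal (RCLike.ofReal ∘ hA.eigenvalues) :
      Matrix (Fin m) (Fin m) ℝ).charpoly = ∏ i, (X - C (hA.eigenvalues i)) := by
    rw [Matrix.charpoly_of_upperTriangular _ (Matrix.blockTriangular_diagonal _)]
    simp [Matrix.diagonal_apply_eq]
  calc A.charpoly
      = ((hA.eigenvectorUnitary : Matrix (Fin m) (Fin m) ℝ) *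
          Matrix.diagonal (RCLike.ofReal ∘ hA.eigenvalues) *
          (hA.eigenvectorUnitary : Matrix (Fin m) (Fin m) ℝ)⁻¹).charpoly := by
        rw [← hinv]; exact congrArg Matrix.charpoly hA.spectral_theorem
    _ = ∏ i, (X - C (hA.eigenvalues i)) := by
        rw [charpoly_conj _ _ hU, hdiag]

lemma eigs_perm_of_charpoly_eq {m : ℕ} {A B : Matrix (Fin m) (Fin m) ℝ}
    (hA : A.IsHermitian) (hB : B.IsHermitian) (h : A.charpoly = B.charpoly) :
    List.Perm (List.ofFn hA.eigenvalues) (List.ofFn hB.eigenvalues) := by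
  rw [← Multiset.coe_eq_coe]
  have key : ∀ (f : Fin m → ℝ), (∏ i, (X - C (f i))).roots = (List.ofFn f : Multiset ℝ) := by
    intro f
    rw [Finset.prod_eq_multiset_prod, ← Fin.univ_val_map (f := f),
      show (fun i => X - C (f i)) = (fun a => X - C a) ∘ f from rfl,
      ← Multiset.map_map, Polynomial.roots_multiset_prod_X_sub_C]
  have := congrArg Polynomial.roots (charpoly_isHermitian hA ▸ charpoly_isHermitian hB ▸ h)
  rwa [key, key] at this

lemma sorted_eq_of_perm {m : ℕ} {f g : Fin m → ℝ} (h : List.Perm (List.ofFn f) (List.ofFn g)) :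
    f ∘ Tuple.sort f = g ∘ Tuple.sort g := by
  apply List.ofFn_injective
  refine List.Perm.eq_of_sortedLE (Tuple.monotone_sort f).sortedLE_ofFn
    (Tuple.monotone_sort g).sortedLE_ofFn ?_
  exact (((Tuple.sort f).ofFn_comp_perm f).trans h).trans ((Tuple.sort g).ofFn_comp_perm g).symm

lemma sortedEigs_mul_comm {m : ℕ} (P Q : Matrix (Fin m) (Fin m) ℝ) (hP : IsUnit P)
    (h1 : (P * Q).IsHermitian) (h2 : (Q * P).IsHermitian) :
    sortedEigs _ h1 = sortedEigs _ h2 := by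
  apply sorted_eq_of_perm
  apply eigs_perm_of_charpoly_eq h1 h2
  have : P * Q = P * (Q * P) * P⁻¹ := by
    rw [Matrix.mul_assoc P (Q * P) P⁻¹, Matrix.mul_assoc Q P P⁻¹,
      Matrix.mul_nonsing_inv _ ((Matrix.isUnit_iff_isUnit_det P).mp hP), Matrix.mul_one]
  rw [this, charpoly_conj _ _ hP]

/-! ### Monotonicity of sorted eigenvalues under the Loewner order -/

variable {m : ℕ}

lemma toEuclideanLin_eigenvectorBasis {A : Matrix (Fin m) (Fin m) ℝ} (hA : A.IsHermitian)
    (i : Fin m) :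
    Matrix.toEuclideanLin A (hA.eigenvectorBasis i) = hA.eigenvalues i • hA.eigenvectorBasis i := by
  have h := hA.mulVec_eigenvectorBasis i
  ext j
  have := congrFun h j
  simpa [Matrix.toEuclideanLin_apply] using this

lemma quad_expand {A : Matrix (Fin m) (Fin m) ℝ} (hA : A.IsHermitian)
    (x : EuclideanSpace ℝ (Fin m)) :
    ⟪x, Matrix.toEuclideanLin A x⟫ =
      ∑ i, hA.eigenvalues i * (hA.eigenvectorBasis.repr x i) ^ 2 := by
  set b := hA.eigenvectorBasis with hb
  have hTx : Matrix.toEuclideanLin A x = ∑ i, (b.repr x i * hA.eigenvalues i) • b i := by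
    conv_lhs => rw [← b.sum_repr x]
    rw [map_sum]
    refine Finset.sum_congr rfl fun i _ => ?_
    rw [_root_.map_smul, toEuclideanLin_eigenvectorBasis hA i, smul_smul]
  rw [hTx, inner_sum]
  refine Finset.sum_congr rfl fun i _ => ?_
  rw [real_inner_smul_right, real_inner_comm, ← b.repr_apply_apply]
  ring

lemma inner_self_expand (b : OrthonormalBasis (Fin m) ℝ (EuclideanSpace ℝ (Fin m)))
    (x : EuclideanSpace ℝ (Fin m)) :
    ⟪x, x⟫ = ∑ i, (b.repr x i) ^ 2 := by
  rw [← b.repr.inner_map_map x x, PiLp.inner_apply]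
  refine Finset.sum_congr rfl fun i _ => ?_
  simp [sq]

lemma repr_eq_zero_of_mem_span (b : OrthonormalBasis (Fin m) ℝ (EuclideanSpace ℝ (Fin m)))
    (s : Finset (Fin m)) {x : EuclideanSpace ℝ (Fin m)}
    (hx : x ∈ Submodule.span ℝ (⇑b '' (s : Set (Fin m)))) :
    ∀ j ∉ s, b.repr x j = 0 := by
  induction hx using Submodule.span_induction with
  | mem y hy =>
    obtain ⟨i, his, rfl⟩ := hy
    intro j hj
    rw [b.repr_self, EuclideanSpace.single_apply]
    exact if_neg fun h => hj (by rw [h]; exact his)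
  | zero => simp
  | add y z _ _ hy hz => intro j hj; rw [map_add]; simp [hy j hj, hz j hj]
  | smul c y _ hy => intro j hj; rw [_root_.map_smul]; simp [hy j hj]

lemma key_bound_lower {A : Matrix (Fin m) (Fin m) ℝ} (hA : A.IsHermitian) (s : Finset (Fin m))
    (c : ℝ) (hc : ∀ i ∈ s, c ≤ hA.eigenvalues i) {x : EuclideanSpace ℝ (Fin m)}
    (hx : x ∈ Submodule.span ℝ (⇑hA.eigenvectorBasis '' (s : Set (Fin m)))) :
    c * ⟪x, x⟫ ≤ ⟪x, Matrix.toEuclideanLin A x⟫ := by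
  rw [quad_expand hA, inner_self_expand hA.eigenvectorBasis, Finset.mul_sum]
  refine Finset.sum_le_sum fun i _ => ?_
  by_cases his : i ∈ s
  · exact mul_le_mul_of_nonneg_right (hc i his) (sq_nonneg _)
  · rw [repr_eq_zero_of_mem_span _ s hx i his]
    simp

lemma key_bound_upper {A : Matrix (Fin m) (Fin m) ℝ} (hA : A.IsHermitian) (s : Finset (Fin m))
    (c : ℝ) (hc : ∀ i ∈ s, hA.eigenvalues i ≤ c) {x : EuclideanSpace ℝ (Fin m)}
    (hx : x ∈ Submodule.span ℝ (⇑hA.eigenvectorBasis '' (s : Set (Fin m)))) :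
    ⟪x, Matrix.toEuclideanLin A x⟫ ≤ c * ⟪x, x⟫ := by
  rw [quad_expand hA, inner_self_expand hA.eigenvectorBasis, Finset.mul_sum]
  refine Finset.sum_le_sum fun i _ => ?_
  by_cases his : i ∈ s
  · exact mul_le_mul_of_nonneg_right (hc i his) (sq_nonneg _)
  · rw [repr_eq_zero_of_mem_span _ s hx i his]
    simp

lemma psd_inner_nonneg {M : Matrix (Fin m) (Fin m) ℝ} (hM : M.PosSemidef)
    (x : EuclideanSpace ℝ (Fin m)) : 0 ≤ ⟪x, Matrix.toEuclideanLin M x⟫ := by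
  have h := hM.dotProduct_mulVec_nonneg x
  rw [star_trivial] at h
  calc (0:ℝ) ≤ dotProduct x (M *ᵥ x) := h
    _ = ⟪x, Matrix.toEuclideanLin M x⟫ := by
        rw [Matrix.toEuclideanLin_apply, PiLp.inner_apply]
        simp only [dotProduct]
        exact Finset.sum_congr rfl fun i _ => mul_comm _ _

lemma finrank_span_orthonormal (b : OrthonormalBasis (Fin m) ℝ (EuclideanSpace ℝ (Fin m)))
    (s : Finset (Fin m)) :
    Module.finrank ℝ (Submodule.span ℝ (⇑b '' (s : Set (Fin m)))) = s.card := by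
  have hli : LinearIndependent ℝ (fun i : {x // x ∈ s} => b i) :=
    b.orthonormal.linearIndependent.comp _ Subtype.val_injective
  have h := finrank_span_eq_card hli
  have heq : (fun i : {x // x ∈ s} => b i) = ⇑b ∘ Subtype.val := rfl
  rw [heq, Set.range_comp] at h
  have hset : Set.range (Subtype.val : {x // x ∈ s} → Fin m) = (s : Set (Fin m)) :=
    Subtype.range_val
  rw [hset] at h
  rw [h, Fintype.card_coe]

lemma sortedEigs_mono {A B : Matrix (Fin m) (Fin m) ℝ}
    (hA : A.IsHermitian) (hB : B.IsHermitian) (hAB : (B - A).PosSemidef) (k : Fin m) :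
    sortedEigs A hA k ≤ sortedEigs B hB k := by
  classical
  set pA := Tuple.sort hA.eigenvalues with hpA
  set pB := Tuple.sort hB.eigenvalues with hpB
  set sA : Finset (Fin m) := (Finset.Ici k).image pA with hsA
  set sB : Finset (Fin m) := (Finset.Iic k).image pB with hsB
  set SA := Submodule.span ℝ (⇑hA.eigenvectorBasis '' (sA : Set (Fin m))) with hSA
  set SB := Submodule.span ℝ (⇑hB.eigenvectorBasis '' (sB : Set (Fin m))) with hSB
  have hcardA : sA.card = m - k.val := by
    rw [hsA, Finset.card_image_of_injective _ (Tuple.sort hA.eigenvalues).injective,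
      Fin.card_Ici]
  have hcardB : sB.card = k.val + 1 := by
    rw [hsB, Finset.card_image_of_injective _ (Tuple.sort hB.eigenvalues).injective,
      Fin.card_Iic]
  have hrA : Module.finrank ℝ SA = m - k.val := by
    rw [hSA, finrank_span_orthonormal, hcardA]
  have hrB : Module.finrank ℝ SB = k.val + 1 := by
    rw [hSB, finrank_span_orthonormal, hcardB]
  have hsum := Submodule.finrank_sup_add_finrank_inf_eq SA SB
  have hle : Module.finrank ℝ ↥(SA ⊔ SB) ≤ m := by
    have := Submodule.finrank_le (SA ⊔ SB)
    rwa [finrank_euclideanSpace, Fintype.card_fin] at this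
  have hpos : 0 < Module.finrank ℝ ↥(SA ⊓ SB) := by
    have hk := k.isLt
    omega
  rw [Module.finrank_pos_iff] at hpos
  obtain ⟨⟨x, hx⟩, hne⟩ := exists_ne (0 : ↥(SA ⊓ SB))
  have hx0 : x ≠ 0 := fun h => hne (Subtype.ext h)
  have hxA : x ∈ SA := hx.1
  have hxB : x ∈ SB := hx.2
  have hcA : ∀ i ∈ sA, sortedEigs A hA k ≤ hA.eigenvalues i := by
    intro i hi
    rw [hsA, Finset.mem_image] at hi
    obtain ⟨t, ht, rfl⟩ := hi
    rw [Finset.mem_Ici] at ht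
    exact Tuple.monotone_sort hA.eigenvalues ht
  have hcB : ∀ i ∈ sB, hB.eigenvalues i ≤ sortedEigs B hB k := by
    intro i hi
    rw [hsB, Finset.mem_image] at hi
    obtain ⟨t, ht, rfl⟩ := hi
    rw [Finset.mem_Iic] at ht
    exact Tuple.monotone_sort hB.eigenvalues ht
  have e1 := key_bound_lower hA sA (sortedEigs A hA k) hcA hxA
  have e2 := key_bound_upper hB sB (sortedEigs B hB k) hcB hxB
  have e3 : ⟪x, Matrix.toEuclideanLin A x⟫ ≤ ⟪x, Matrix.toEuclideanLin B x⟫ := by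
    have h0 := psd_inner_nonneg hAB x
    rw [_root_.map_sub] at h0
    rw [LinearMap.sub_apply, inner_sub_right] at h0
    linarith
  have hxx : (0:ℝ) < ⟪x, x⟫ := by
    rcases lt_or_eq_of_le (real_inner_self_nonneg (x := x)) with h | h
    · exact h
    · exact absurd ((inner_self_eq_zero (𝕜 := ℝ)).mp h.symm) hx0
  nlinarith [e1, e2, e3, hxx]

/-! ### Small algebraic helpers -/

lemma conjT_eq (A : Matrix (Fin m) (Fin m) ℝ) : Aᴴ = Aᵀ := rfl

lemma herm_sandwich {M P : Matrix (Fin m) (Fin m) ℝ} (hM : M.IsHermitian)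
    (hP : P.IsHermitian) : (P * M * P).IsHermitian := by
  have h := Matrix.isHermitian_conjTranspose_mul_mul P hM
  rwa [hP.eq] at h

lemma sqrt_isUnit {M : Matrix (Fin m) (Fin m) ℝ} (hM : M.PosDef) :
    IsUnit hM.posSemidef.sqrt := by
  rw [Matrix.isUnit_iff_isUnit_det, isUnit_iff_ne_zero]
  intro h
  have h1 := congrArg Matrix.det hM.posSemidef.sqrt_mul_self
  rw [Matrix.det_mul, h, mul_zero] at h1
  exact hM.det_pos.ne' h1.symm

lemma posDef_sandwich {M P : Matrix (Fin m) (Fin m) ℝ} (hM : M.PosDef) (hP : IsUnit P) :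
    (Pᵀ * M * P).PosDef := by
  refine Matrix.PosDef.of_dotProduct_mulVec_pos ?_ ?_
  · have h := Matrix.isHermitian_conjTranspose_mul_mul P hM.1
    rwa [conjT_eq] at h
  · intro x hx
    have hPx : P *ᵥ x ≠ 0 := by
      intro h0
      apply hx
      have h2 : P⁻¹ *ᵥ (P *ᵥ x) = x := by
        rw [Matrix.mulVec_mulVec,
          Matrix.nonsing_inv_mul P ((Matrix.isUnit_iff_isUnit_det P).mp hP),
          Matrix.one_mulVec]
      rw [← h2, h0, Matrix.mulVec_zero]
    have h := hM.dotProduct_mulVec_pos hPx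
    rw [star_trivial] at h ⊢
    calc (0:ℝ) < dotProduct (P *ᵥ x) (M *ᵥ (P *ᵥ x)) := h
      _ = dotProduct x ((Pᵀ * M * P) *ᵥ x) := by
          rw [← Matrix.mulVec_mulVec, ← Matrix.mulVec_mulVec,
            dotProduct_mulVec x, Matrix.vecMul_transpose]

lemma exists_sqrt {M : Matrix (Fin m) (Fin m) ℝ} (hM : M.PosDef) :
    ∃ T : Matrix (Fin m) (Fin m) ℝ, T.IsHermitian ∧ T * T = M ∧ IsUnit T :=
  ⟨hM.posSemidef.sqrt, hM.posSemidef.posSemidef_sqrt.1, hM.posSemidef.sqrt_mul_self,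
    sqrt_isUnit hM⟩

/-! ### The core argument -/

lemma main_core (S M₁ M₂ R₁ R₂ : Matrix (Fin m) (Fin m) ℝ)
    (h₁ : M₁.PosDef) (h₂ : M₂.PosDef) (h₁₂ : (M₁ - M₂).PosSemidef)
    (hSu : IsUnit S) (hST : Sᵀ = -S)
    (hR₁h : R₁.IsHermitian) (hR₂h : R₂.IsHermitian)
    (hRR₁ : R₁ * R₁ = M₁) (hRR₂ : R₂ * R₂ = M₂)
    (hR₁u : IsUnit R₁) (hR₂u : IsUnit R₂)
    (hH₁ : (-(R₁ * S * M₁ * S * R₁)).IsHermitian)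
    (hH₂ : (-(R₂ * S * M₂ * S * R₂)).IsHermitian) :
    ∀ k, sortedEigs _ hH₂ k ≤ sortedEigs _ hH₁ k := by
  have hK₁ : (Sᵀ * M₁ * S).PosDef := posDef_sandwich h₁ hSu
  have hK₂ : (Sᵀ * M₂ * S).PosDef := posDef_sandwich h₂ hSu
  obtain ⟨T₂, hT₂h, hTT₂, hT₂u⟩ := exists_sqrt hK₂
  -- basic algebraic identities
  have idA₁ : -(R₁ * S * M₁ * S * R₁) = R₁ * (Sᵀ * M₁ * S) * R₁ := by
    rw [hST]
    simp only [Matrix.neg_mul, Matrix.mul_neg, Matrix.mul_assoc]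
  have idA₂ : -(R₂ * S * M₂ * S * R₂) = R₂ * (Sᵀ * M₂ * S) * R₂ := by
    rw [hST]
    simp only [Matrix.neg_mul, Matrix.mul_neg, Matrix.mul_assoc]
  have idPQ₂ : R₂ * (Sᵀ * M₂ * S) * R₂ = (R₂ * T₂) * (T₂ * R₂) := by
    rw [← hTT₂]
    simp only [Matrix.mul_assoc]
  have idQP₂ : (T₂ * R₂) * (R₂ * T₂) = T₂ * M₂ * T₂ := by
    rw [Matrix.mul_assoc T₂ R₂ _, ← Matrix.mul_assoc R₂ R₂ T₂, hRR₂, ← Matrix.mul_assoc]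
  have idPQ' : T₂ * M₁ * T₂ = (T₂ * R₁) * (R₁ * T₂) := by
    rw [← hRR₁]
    simp only [Matrix.mul_assoc]
  have idQP' : (R₁ * T₂) * (T₂ * R₁) = R₁ * (Sᵀ * M₂ * S) * R₁ := by
    rw [Matrix.mul_assoc R₁ T₂ _, ← Matrix.mul_assoc T₂ T₂ R₁, hTT₂, ← Matrix.mul_assoc]
  -- hermitian certificates
  have hH2' : (T₂ * M₂ * T₂).IsHermitian := herm_sandwich h₂.1 hT₂h
  have hH2'' : (T₂ * M₁ * T₂).IsHermitian := herm_sandwich h₁.1 hT₂h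
  have hHK₂ : (R₁ * (Sᵀ * M₂ * S) * R₁).IsHermitian := herm_sandwich hK₂.1 hR₁h
  have hHK₁ : (R₁ * (Sᵀ * M₁ * S) * R₁).IsHermitian := herm_sandwich hK₁.1 hR₁h
  have hPQ₂ : ((R₂ * T₂) * (T₂ * R₂)).IsHermitian := by
    rw [← idPQ₂]; exact herm_sandwich hK₂.1 hR₂h
  have hQP₂ : ((T₂ * R₂) * (R₂ * T₂)).IsHermitian := by rw [idQP₂]; exact hH2'
  have hPQ' : ((T₂ * R₁) * (R₁ * T₂)).IsHermitian := by rw [← idPQ']; exact hH2''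
  have hQP' : ((R₁ * T₂) * (T₂ * R₁)).IsHermitian := by rw [idQP']; exact hHK₂
  -- the chain
  have s1 : sortedEigs _ hH₂ = sortedEigs _ hPQ₂ := sortedEigs_congr (idA₂.trans idPQ₂) _ _
  have s2 : sortedEigs _ hPQ₂ = sortedEigs _ hQP₂ :=
    sortedEigs_mul_comm (R₂ * T₂) (T₂ * R₂) (hR₂u.mul hT₂u) hPQ₂ hQP₂
  have s3 : sortedEigs _ hQP₂ = sortedEigs _ hH2' := sortedEigs_congr idQP₂ _ _
  have s4 : ∀ k, sortedEigs _ hH2' k ≤ sortedEigs _ hH2'' k := by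
    intro k
    apply sortedEigs_mono
    have h := h₁₂.mul_mul_conjTranspose_same T₂
    rw [hT₂h.eq] at h
    have e : T₂ * (M₁ - M₂) * T₂ = T₂ * M₁ * T₂ - T₂ * M₂ * T₂ := by
      rw [Matrix.mul_sub, Matrix.sub_mul]
    rwa [e] at h
  have s5 : sortedEigs _ hH2'' = sortedEigs _ hPQ' := sortedEigs_congr idPQ' _ _
  have s6 : sortedEigs _ hPQ' = sortedEigs _ hQP' :=
    sortedEigs_mul_comm (T₂ * R₁) (R₁ * T₂) (hT₂u.mul hR₁u) hPQ' hQP'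
  have s7 : sortedEigs _ hQP' = sortedEigs _ hHK₂ := sortedEigs_congr idQP' _ _
  have s8 : ∀ k, sortedEigs _ hHK₂ k ≤ sortedEigs _ hHK₁ k := by
    intro k
    apply sortedEigs_mono
    have hKd : (Sᵀ * (M₁ - M₂) * S).PosSemidef := by
      have h := h₁₂.conjTranspose_mul_mul_same S
      rwa [conjT_eq] at h
    have h := hKd.mul_mul_conjTranspose_same R₁
    rw [hR₁h.eq] at h
    have e : R₁ * (Sᵀ * (M₁ - M₂) * S) * R₁ =
        R₁ * (Sᵀ * M₁ * S) * R₁ - R₁ * (Sᵀ * M₂ * S) * R₁ := by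
      rw [Matrix.mul_sub Sᵀ, Matrix.sub_mul _ _ S, Matrix.mul_sub R₁, Matrix.sub_mul]
    rwa [e] at h
  have s9 : sortedEigs _ hHK₁ = sortedEigs _ hH₁ := sortedEigs_congr idA₁.symm _ _
  intro k
  have t1 := congrFun (s1.trans (s2.trans s3)) k
  have t2 := congrFun (s5.trans (s6.trans s7)) k
  have t3 := congrFun s9 k
  have u1 := s4 k
  have u2 := s8 k
  linarith

end SympSpecAux

/-- **Monotonicity of the symplectic spectrum (Lemma 2).** If `M₁ ≥ M₂ > 0`, then for each
`k` the `k`-th smallest eigenvalue of `-√M₁·σ·M₁·σ·√M₁` dominates that of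
`-√M₂·σ·M₂·σ·√M₂`; equivalently the ordered symplectic eigenvalues of `M₁` dominate those
of `M₂` entrywise. -/
theorem symplectic_spectrum_monotone (n : ℕ)
    (M₁ M₂ : Matrix (Fin (2 * n)) (Fin (2 * n)) ℝ)
    (h₁ : M₁.PosDef) (h₂ : M₂.PosDef) (h₁₂ : (M₁ - M₂).PosSemidef)
    (hH₁ : (-(h₁.posSemidef.sqrt * symp n * M₁ * symp n * h₁.posSemidef.sqrt)).IsHermitian)
    (hH₂ : (-(h₂.posSemidef.sqrt * symp n * M₂ * symp n * h₂.posSemidef.sqrt)).IsHermitian) :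
    ∀ k, sortedEigs _ hH₂ k ≤ sortedEigs _ hH₁ k := by
  exact SympSpecAux.main_core (symp n) M₁ M₂ h₁.posSemidef.sqrt h₂.posSemidef.sqrt
    h₁ h₂ h₁₂ (SympSpecAux.symp_isUnit n) (SympSpecAux.symp_transpose n)
    h₁.posSemidef.posSemidef_sqrt.1 h₂.posSemidef.posSemidef_sqrt.1
    h₁.posSemidef.sqrt_mul_self h₂.posSemidef.sqrt_mul_self
    (SympSpecAux.sqrt_isUnit h₁) (SympSpecAux.sqrt_isUnit h₂) hH₁ hH₂
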